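/- Let n be a positive integer and let Łₙ be the (n+1)-element subalgebra of the standard MV-algebra with domain {0, 1/n, …, (n−1)/n, 1}. For each m ≤ n there exists a one-variable Łukasiewicz formula δ that is a characteristic formula for m/n in Łₙ: δ(m/n) = 1 and δ(x) = 0 for all x ∈ Łₙ with x ≠ m/n. -/

import Mathlib

/-- One-variable Łukasiewicz formulas. -/
inductive LukFormula where
  | var : LukFormula
  | zero : LukFormula
  | one : LukFormula
  | neg : LukFormula → LukFormula
  | oplus : LukFormula → LukFormula → LukFormula
  | sand : LukFormula → LukFormula → LukFormula
  | imp : LukFormula → LukFormula → LukFormula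
  | and : LukFormula → LukFormula → LukFormula
  | or : LukFormula → LukFormula → LukFormula

noncomputable def LukFormula.eval : LukFormula → ℝ → ℝ
  | .var, x => x
  | .zero, _ => 0
  | .one, _ => 1
  | .neg t, x => 1 - t.eval x
  | .oplus t u, x => min (t.eval x + u.eval x) 1
  | .sand t u, x => max (t.eval x + u.eval x - 1) 0
  | .imp t u, x => min (1 - t.eval x + u.eval x) 1
  | .and t u, x => min (t.eval x) (u.eval x)
  | .or t u, x => max (t.eval x) (u.eval x)

/-- Formula computing `clamp (2^t * x - c)` for `c < 2^t`. -/
def pow2F : ℕ → ℕ → LukFormula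
  | 0, _ => .var
  | (t+1), c =>
    if c % 2 = 0 then .oplus (pow2F t (c/2)) (pow2F t (c/2))
    else .sand (pow2F t (c/2)) (pow2F t (c/2))

lemma clamp_double (u : ℝ) :
    min (max 0 (min 1 u) + max 0 (min 1 u)) 1 = max 0 (min 1 (2*u)) := by
  rcases le_total u 0 with h|h <;> rcases le_total 1 u with h1|h1 <;>
    simp [max_def, min_def] <;> split_ifs <;> linarith

lemma clamp_double' (u : ℝ) :
    max (max 0 (min 1 u) + max 0 (min 1 u) - 1) 0 = max 0 (min 1 (2*u - 1)) := by
  rcases le_total u 0 with h|h <;> rcases le_total 1 u with h1|h1 <;>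
    simp [max_def, min_def] <;> split_ifs <;> linarith

lemma pow2F_eval : ∀ (t c : ℕ), c < 2^t → ∀ x : ℝ, 0 ≤ x → x ≤ 1 →
    (pow2F t c).eval x = max 0 (min 1 ((2:ℝ)^t * x - c))
  | 0, c, hc, x, h0, h1 => by
      interval_cases c
      simp [pow2F, LukFormula.eval]
      rw [min_eq_right h1, max_eq_right h0]
  | (t+1), c, hc, x, h0, h1 => by
      have hc2 : c / 2 < 2 ^ t := by
        have h2 : 2^(t+1) = 2 * 2^t := by ring
        omega
      have ih := pow2F_eval t (c/2) hc2 x h0 h1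
      by_cases hpar : c % 2 = 0
      · have hcc : (c : ℝ) = 2 * ((c/2 : ℕ) : ℝ) := by
          exact_mod_cast (by omega : c = 2*(c/2))
        simp only [pow2F, hpar, if_pos, LukFormula.eval, ih]
        rw [clamp_double]
        congr 2
        rw [hcc]; ring
      · have hcc : (c : ℝ) = 2 * ((c/2 : ℕ) : ℝ) + 1 := by
          exact_mod_cast (by omega : c = 2*(c/2) + 1)
        simp only [pow2F, hpar, if_neg, LukFormula.eval, ih, if_false]
        rw [clamp_double']
        congr 2
        rw [hcc]; ring

/-- Characteristic formula of the upset `{k/n : k ≥ m}` in Łₙ, for `1 ≤ m ≤ n`. -/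
def upF (n m : ℕ) : LukFormula := pow2F (n+2) (m * 2^(n+2) / n - 2)

lemma upF_eval (n m k : ℕ) (hn : 0 < n) (hm1 : 1 ≤ m) (hmn : m ≤ n) (hk : k ≤ n) :
    (upF n m).eval ((k:ℝ)/n) = if m ≤ k then 1 else 0 := by
  set P := 2^(n+2) with hPdef
  set q := m * P / n with hqdef
  set c := q - 2 with hcdef
  have hr : m * P % n < n := Nat.mod_lt _ hn
  have hdm : n * q + m * P % n = m * P := Nat.div_add_mod (m*P) n
  have hP4 : 4 * n ≤ P := by
    have h2n : n < 2^n := Nat.lt_two_pow_self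
    have : P = 2^n * 4 := by rw [hPdef]; ring
    omega
  have hmP : P ≤ m * P := Nat.le_mul_of_pos_left P (by omega)
  have hq2 : 2 ≤ q := by
    by_contra h
    push_neg at h
    have h1 : n * q ≤ n * 1 := Nat.mul_le_mul_left n (by omega)
    have h1' : n * q ≤ n := by omega
    linarith
  have hqP : q ≤ P := by
    have h1 : n * q ≤ m * P := by omega
    have h2 : m * P ≤ n * P := Nat.mul_le_mul_right P hmn
    exact Nat.le_of_mul_le_mul_left (le_trans h1 h2) hn
  have hcP : c < P := by omega
  -- real-number facts
  have hnR : (0:ℝ) < n := by exact_mod_cast hn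
  have hx0 : (0:ℝ) ≤ (k:ℝ)/n := by positivity
  have hx1 : (k:ℝ)/n ≤ 1 := by
    rw [div_le_one hnR]; exact_mod_cast hk
  have heval := pow2F_eval (n+2) c hcP ((k:ℝ)/n) hx0 hx1
  have hcR : (c:ℝ) = (q:ℝ) - 2 := by
    rw [hcdef]; push_cast [Nat.cast_sub hq2]; ring
  have hdmR : (n:ℝ) * q + ((m * P % n : ℕ):ℝ) = m * P := by exact_mod_cast hdm
  have hrR : ((m * P % n : ℕ):ℝ) < n := by exact_mod_cast hr
  have hP4R : 4 * (n:ℝ) ≤ P := by exact_mod_cast hP4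
  have hPR : ((P:ℕ):ℝ) = (2:ℝ)^(n+2) := by rw [hPdef]; push_cast; ring
  rw [show (upF n m) = pow2F (n+2) c by rfl, heval, ← hPR]
  by_cases hmk : m ≤ k
  · rw [if_pos hmk]
    have hmkR : ((m:ℝ)) ≤ k := by exact_mod_cast hmk
    have key : (1:ℝ) ≤ (P:ℕ) * ((k:ℝ)/n) - c := by
      rw [← mul_div_assoc, le_sub_iff_add_le, le_div_iff₀ hnR]
      have : ((m:ℝ)) * P ≤ k * P := by nlinarith
      nlinarith
    rw [min_eq_left (by linarith), max_eq_right (by linarith)]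
  · rw [if_neg hmk]
    push_neg at hmk
    have hkm : (k:ℝ) ≤ (m:ℝ) - 1 := by
      have : k + 1 ≤ m := hmk
      have : ((k:ℝ)) + 1 ≤ m := by exact_mod_cast this
      linarith
    have key : (P:ℕ) * ((k:ℝ)/n) - c ≤ 0 := by
      rw [← mul_div_assoc, sub_nonpos, div_le_iff₀ hnR]
      have h1 : (k:ℝ) * P ≤ ((m:ℝ) - 1) * P := by nlinarith
      nlinarith
    exact max_eq_left (min_le_iff.mpr (Or.inr key))

/-- For every m ≤ n there is a characteristic formula for m/n in the
(n+1)-valued Łukasiewicz algebra Łₙ = {0, 1/n, …, 1}. -/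
theorem stmt15 (n : ℕ) (hn : 0 < n) (m : ℕ) (hm : m ≤ n) :
    ∃ δ : LukFormula, δ.eval ((m : ℝ) / n) = 1 ∧
      ∀ k : ℕ, k ≤ n → k ≠ m → δ.eval ((k : ℝ) / n) = 0 := by
  rcases Nat.eq_zero_or_pos m with hm0 | hm1
  · subst hm0
    refine ⟨.neg (upF n 1), ?_, ?_⟩
    · have h := upF_eval n 1 0 hn le_rfl hn (Nat.zero_le n)
      norm_num at h
      simp [LukFormula.eval, h]
    · intro k hk hkm
      have h1k : 1 ≤ k := Nat.one_le_iff_ne_zero.mpr hkm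
      simp [LukFormula.eval, upF_eval n 1 k hn le_rfl hn hk, h1k]
  · rcases eq_or_lt_of_le hm with hmn | hmn
    · refine ⟨upF n m, ?_, ?_⟩
      · have h := upF_eval n m m hn hm1 hm (le_of_eq hmn)
        simp [h]
      · intro k hk hkm
        have h := upF_eval n m k hn hm1 hm hk
        have hnk : ¬ m ≤ k := by omega
        simp [h, hnk]
    · refine ⟨.and (upF n m) (.neg (upF n (m+1))), ?_, ?_⟩
      · have h1 := upF_eval n m m hn hm1 hm hm
        have h2 := upF_eval n (m+1) m hn (by omega) (by omega) hm
        simp [LukFormula.eval, h1, h2]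
      · intro k hk hkm
        have h1 := upF_eval n m k hn hm1 hm hk
        have h2 := upF_eval n (m+1) k hn (by omega) (by omega) hk
        rcases lt_or_gt_of_ne hkm with h | h
        · have e1 : ¬ m ≤ k := by omega
          have e2 : ¬ m + 1 ≤ k := by omega
          simp [LukFormula.eval, h1, h2, e1, e2]
        · have e1 : m ≤ k := by omega
          have e2 : m + 1 ≤ k := by omega
          simp [LukFormula.eval, h1, h2, e1, e2]
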